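/- Let G be a unicyclic graph on n vertices whose unique cycle has length l, and let x be a vertex lying on the cycle. Then R^w(x) = 2·R(x) − (n − l), where R^w(x) = Σ_{y∈V(G)} deg(y)·r(x,y) and R(x) = Σ_{y∈V(G)} r(x,y). -/

import Mathlib

open SimpleGraph Finset

attribute [local instance] Classical.propDecidable

variable {V : Type*}

/-- Degree of a vertex as a real number. -/
noncomputable def degR [Fintype V] (G : SimpleGraph V) (x : V) : ℝ :=
  ((Finset.univ.filter fun y => G.Adj x y).card : ℝ)

/-- Number of edges of a graph. -/
noncomputable def esize (G : SimpleGraph V) : ℕ := Nat.card G.edgeSet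

/-- Dirichlet energy of a potential. -/
noncomputable def energyFn [Fintype V] (G : SimpleGraph V) (φ : V → ℝ) : ℝ :=
  (1/2) * ∑ u, ∑ v, if G.Adj u v then (φ u - φ v)^2 else 0

/-- Effective resistance between two vertices (unit resistors on edges),
via the Dirichlet variational principle: the reciprocal of the minimal energy
of a potential with value 1 at `x` and 0 at `y`. -/
noncomputable def eres [Fintype V] (G : SimpleGraph V) (x y : V) : ℝ :=
  (sInf {e : ℝ | ∃ φ : V → ℝ, φ x = 1 ∧ φ y = 0 ∧ e = energyFn G φ})⁻¹

/-- The transition matrix of the simple random walk, killed at `y`. -/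
noncomputable def hitMat [Fintype V] (G : SimpleGraph V) (y : V) : Matrix V V ℝ :=
  Matrix.of fun u v => if v = y then 0 else if G.Adj u v then (degR G u)⁻¹ else 0

/-- Expected hitting time `H_{xy}` of the simple random walk from `x` to `y`,
expressed as the sum of the survival probabilities of the walk killed at `y`. -/
noncomputable def hitting [Fintype V] (G : SimpleGraph V) (x y : V) : ℝ :=
  if x = y then 0 else ∑' k : ℕ, ∑ z, (hitMat G y ^ k) x z

/-- Resistance-centrality `R(x)`. -/
noncomputable def Rres [Fintype V] (G : SimpleGraph V) (x : V) : ℝ := ∑ y, eres G x y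

/-- Weighted resistance-centrality `R^w(x)`. -/
noncomputable def Rw [Fintype V] (G : SimpleGraph V) (x : V) : ℝ :=
  ∑ y, degR G y * eres G x y

/-- Kirchhoff index `Kf(G)`. -/
noncomputable def Kf [Fintype V] (G : SimpleGraph V) : ℝ :=
  (1/2) * ∑ x, ∑ y, eres G x y

/-- Additive degree-Kirchhoff index `Kf⁺(G)`. -/
noncomputable def KfPlus [Fintype V] (G : SimpleGraph V) : ℝ :=
  (1/2) * ∑ x, ∑ y, (degR G x + degR G y) * eres G x y

/-- Multiplicative degree-Kirchhoff index `Kf*(G)`. -/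
noncomputable def KfStar [Fintype V] (G : SimpleGraph V) : ℝ :=
  (1/2) * ∑ x, ∑ y, degR G x * degR G y * eres G x y

/-- Cover cost `CC(x) = Σ_y H_{xy}`. -/
noncomputable def coverCost [Fintype V] (G : SimpleGraph V) (x : V) : ℝ :=
  ∑ y, hitting G x y

/-- Reverse cover cost `RC(x) = Σ_y H_{yx}`. -/
noncomputable def reverseCoverCost [Fintype V] (G : SimpleGraph V) (x : V) : ℝ :=
  ∑ y, hitting G y x

/-- Centrality (transmission) `D(x) = Σ_y d(x,y)`. -/
noncomputable def Dcent [Fintype V] (G : SimpleGraph V) (x : V) : ℝ :=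
  ∑ y, (G.dist x y : ℝ)

/-- Weighted centrality `D^w(x) = Σ_y deg(y)·d(x,y)`. -/
noncomputable def Dw [Fintype V] (G : SimpleGraph V) (x : V) : ℝ :=
  ∑ y, degR G y * (G.dist x y : ℝ)

/-- Wiener index `W(G)`. -/
noncomputable def Wiener [Fintype V] (G : SimpleGraph V) : ℝ :=
  (1/2) * ∑ x, ∑ y, (G.dist x y : ℝ)

/-- `D_{T}(v)`: sum of distances from `v` to the vertices of its connected
component in `G'` (used for the branch trees of a unicyclic graph). -/
noncomputable def branchD [Fintype V] (G' : SimpleGraph V) (v : V) : ℝ :=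
  ∑ u, if G'.Reachable v u then (G'.dist v u : ℝ) else 0

/-- The set of edges of the cycle `c 0 - c 1 - ⋯ - c (l-1) - c 0`. -/
def cycleEdges {l : ℕ} [NeZero l] (c : Fin l → V) : Set (Sym2 V) :=
  Set.range fun i : Fin l => s(c i, c (i + 1))

/-- Distance from a vertex to a set of vertices. -/
noncomputable def distToSet [Fintype V] (G : SimpleGraph V) (x : V) (s : Set V) : ℕ :=
  sInf {d | ∃ y ∈ s, G.dist x y = d}

/-- `v` is the center of a star. -/
def IsStarCenter (G : SimpleGraph V) (v : V) : Prop := ∀ u, u ≠ v → G.Adj v u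

/-- `G` is a star. -/
def IsStar (G : SimpleGraph V) : Prop := ∃ v, IsStarCenter G v

/-- The lollipop graph `P_n^l` : a cycle `C_l` on `0,…,l-1` together with a
path on `l,…,n-1` attached at the cycle vertex `0`. -/
def lollipop (n l : ℕ) : SimpleGraph (Fin n) :=
  SimpleGraph.fromRel (fun a b =>
    (a.val + 1 = b.val ∧ b.val < l) ∨ (a.val = 0 ∧ b.val = l - 1) ∨
    (a.val = 0 ∧ b.val = l) ∨ (l ≤ a.val ∧ a.val + 1 = b.val))

/-- The graph `S_n^l` : a cycle `C_l` on `0,…,l-1` with `n - l` pendant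
vertices `l,…,n-1` attached at the cycle vertex `0`. -/
def starCycle (n l : ℕ) : SimpleGraph (Fin n) :=
  SimpleGraph.fromRel (fun a b =>
    (a.val + 1 = b.val ∧ b.val < l) ∨ (a.val = 0 ∧ b.val = l - 1) ∨
    (a.val = 0 ∧ l ≤ b.val))

/-- The cycle graph `C_n` on `Fin n`. -/
def cycleG (n : ℕ) : SimpleGraph (Fin n) :=
  SimpleGraph.fromRel (fun a b => a.val + 1 = b.val ∨ (a.val = 0 ∧ b.val = n - 1))

/-! ### Auxiliary machinery for the proof of `Rw_on_cycle`. -/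
set_option linter.unusedSectionVars false

section AuxRw

variable [Fintype V]

/-- The finset of ordered adjacent pairs of `G`. -/
noncomputable def DPairs (G : SimpleGraph V) : Finset (V × V) :=
  (Finset.univ ×ˢ Finset.univ).filter fun p => G.Adj p.1 p.2

/-- The set of Dirichlet energies of potentials feasible for `(x, y)`. -/
def ESet (G : SimpleGraph V) (x y : V) : Set ℝ :=
  {e : ℝ | ∃ φ : V → ℝ, φ x = 1 ∧ φ y = 0 ∧ e = energyFn G φ}

lemma eres_def (G : SimpleGraph V) (x y : V) : eres G x y = (sInf (ESet G x y))⁻¹ := rfl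

lemma mem_DPairs {G : SimpleGraph V} {a b : V} (h : G.Adj a b) : (a, b) ∈ DPairs G := by
  simp [DPairs, h]

lemma adj_of_mem_DPairs {G : SimpleGraph V} {p : V × V} (h : p ∈ DPairs G) : G.Adj p.1 p.2 :=
  (Finset.mem_filter.mp h).2

lemma energy_eq (G : SimpleGraph V) (φ : V → ℝ) :
    energyFn G φ = (1/2) * ∑ p ∈ DPairs G, (φ p.1 - φ p.2)^2 := by
  rw [energyFn, DPairs, Finset.sum_filter, Finset.sum_product]

lemma sum_sq_le_twice_energy (G : SimpleGraph V) (φ : V → ℝ) {T : Finset (V × V)}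
    (hT : T ⊆ DPairs G) : ∑ p ∈ T, (φ p.1 - φ p.2)^2 ≤ 2 * energyFn G φ := by
  rw [energy_eq]
  have := Finset.sum_le_sum_of_subset_of_nonneg hT
    (fun p _ _ => sq_nonneg (φ p.1 - φ p.2))
  linarith

lemma energy_nonneg (G : SimpleGraph V) (φ : V → ℝ) : 0 ≤ energyFn G φ := by
  rw [energy_eq]
  have : (0:ℝ) ≤ ∑ p ∈ DPairs G, (φ p.1 - φ p.2)^2 :=
    Finset.sum_nonneg fun p _ => sq_nonneg _
  linarith

lemma ESet_nonneg {G : SimpleGraph V} {x y : V} : ∀ e ∈ ESet G x y, (0:ℝ) ≤ e := by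
  rintro e ⟨φ, -, -, rfl⟩; exact energy_nonneg G φ

lemma bddBelow_ESet (G : SimpleGraph V) (x y : V) : BddBelow (ESet G x y) :=
  ⟨0, fun e he => ESet_nonneg e he⟩

lemma ESet_nonempty {G : SimpleGraph V} {x y : V} (h : x ≠ y) : (ESet G x y).Nonempty := by
  refine ⟨energyFn G (fun w => if w = x then 1 else 0),
    (fun w => if w = x then 1 else 0), by simp, ?_, rfl⟩
  simp [(Ne.symm h)]

lemma telescope {G : SimpleGraph V} (φ : V → ℝ) {a b : V} (p : G.Walk a b) :
    (p.darts.map fun d => φ d.fst - φ d.snd).sum = φ a - φ b := by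
  induction p with
  | nil => simp
  | cons h q ih =>
      simp only [SimpleGraph.Walk.darts_cons, List.map_cons, List.sum_cons, ih]
      ring

lemma sInf_ESet_pos {G : SimpleGraph V} {x y : V} (hr : G.Reachable x y) (hxy : x ≠ y) :
    0 < sInf (ESet G x y) := by
  classical
  obtain ⟨w⟩ := hr
  set p := w.bypass with hpdef
  have hpath : p.IsPath := w.bypass_isPath
  set L : List (V × V) := p.darts.map fun d => (d.fst, d.snd) with hL
  have hnd : L.Nodup := by
    refine List.Nodup.map ?_ (SimpleGraph.Walk.darts_nodup_of_support_nodup hpath.support_nodup)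
    intro d d' h
    apply SimpleGraph.Dart.ext
    rw [← Prod.mk.eta (p := d.toProd), ← Prod.mk.eta (p := d'.toProd)]
    exact h
  set T : Finset (V × V) := L.toFinset with hT
  have hTsub : T ⊆ DPairs G := by
    intro q hq
    rw [hT, List.mem_toFinset, hL] at hq
    obtain ⟨d, hd, rfl⟩ := List.mem_map.mp hq
    exact mem_DPairs d.adj
  have hsum : ∀ ψ : V → ℝ, (∑ q ∈ T, (ψ q.1 - ψ q.2)) = ψ x - ψ y := by
    intro ψ
    rw [hT, List.sum_toFinset _ hnd, hL, List.map_map]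
    exact telescope ψ p
  have hTcard : 0 < T.card := by
    by_contra h
    push_neg at h
    have hTe : T = ∅ := Finset.card_eq_zero.mp (Nat.le_zero.mp h)
    have := hsum (fun w => if w = x then 1 else 0)
    rw [hTe] at this
    simp [Ne.symm hxy] at this
  have hc : (0:ℝ) < T.card := by exact_mod_cast hTcard
  have key : ∀ e ∈ ESet G x y, 1 / (2 * (T.card : ℝ)) ≤ e := by
    rintro e ⟨φ, hφx, hφy, rfl⟩
    have h1 : (∑ q ∈ T, (φ q.1 - φ q.2))^2 ≤ (T.card : ℝ) * ∑ q ∈ T, (φ q.1 - φ q.2)^2 :=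
      sq_sum_le_card_mul_sum_sq
    rw [hsum φ, hφx, hφy] at h1
    have h2 : ∑ q ∈ T, (φ q.1 - φ q.2)^2 ≤ 2 * energyFn G φ := sum_sq_le_twice_energy G φ hTsub
    rw [div_le_iff₀ (by positivity)]
    nlinarith [mul_le_mul_of_nonneg_left h2 hc.le]
  exact lt_of_lt_of_le (by positivity) (le_csInf (ESet_nonempty hxy) key)

lemma reach_closure {G H : SimpleGraph V} {x : V}
    (hcl : ∀ a b, G.Adj a b → H.Reachable x a → H.Reachable x b) :
    ∀ {a b : V}, H.Reachable x a → G.Walk a b → H.Reachable x b := by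
  intro a b ha p
  induction p with
  | nil => exact ha
  | cons h q ih => exact ih (hcl _ _ h ha)

lemma reach_other {G : SimpleGraph V} (hpre : G.Preconnected) {x u v : V} (huv : G.Adj u v)
    (hu : ¬ (G.deleteEdges {s(u,v)}).Reachable x u) :
    (G.deleteEdges {s(u,v)}).Reachable x v := by
  by_contra hv
  have hcl : ∀ a b, G.Adj a b → (G.deleteEdges {s(u,v)}).Reachable x a →
      (G.deleteEdges {s(u,v)}).Reachable x b := by
    intro a b hab ha
    by_cases he : s(a, b) = s(u, v)
    · rcases Sym2.eq_iff.mp he with ⟨h1, h2⟩ | ⟨h1, h2⟩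
      · rw [h1] at ha; exact absurd ha hu
      · rw [h1] at ha; exact absurd ha hv
    · refine ha.trans (SimpleGraph.Adj.reachable ?_)
      rw [SimpleGraph.deleteEdges_adj]
      exact ⟨hab, by simpa using he⟩
  obtain ⟨w⟩ := hpre x u
  exact hu (reach_closure hcl (SimpleGraph.Reachable.refl x) w)

lemma far_unique {G : SimpleGraph V} (hpre : G.Preconnected) {x u v v' : V}
    (hv : G.Adj u v) (hv' : G.Adj u v')
    (hfar : ¬ (G.deleteEdges {s(u,v)}).Reachable x u)
    (hfar' : ¬ (G.deleteEdges {s(u,v')}).Reachable x u) : v = v' := by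
  have hxu : x ≠ u := by rintro rfl; exact hfar (SimpleGraph.Reachable.refl x)
  obtain ⟨w⟩ := hpre x u
  set p := w.bypass with hpdef
  have hpath : p.IsPath := w.bypass_isPath
  have hq : p.reverse.IsPath := hpath.reverse
  obtain ⟨w0, hadj0, q', hcons⟩ := SimpleGraph.Walk.exists_eq_cons_of_ne (Ne.symm hxu) p.reverse
  have husup : u ∉ q'.support := by
    rw [hcons] at hq
    exact ((SimpleGraph.Walk.cons_isPath_iff _ _).mp hq).2
  have key : ∀ z : V, G.Adj u z → ¬ (G.deleteEdges {s(u,z)}).Reachable x u → z = w0 := by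
    intro z hadjz hz
    by_contra hzw
    have hnotin : ∀ e ∈ p.edges, e ∉ ({s(u,z)} : Set (Sym2 V)) := by
      intro e he hmem
      rw [Set.mem_singleton_iff] at hmem; subst hmem
      have hrev : s(u,z) ∈ p.reverse.edges := by
        rw [SimpleGraph.Walk.edges_reverse, List.mem_reverse]; exact he
      rw [hcons, SimpleGraph.Walk.edges_cons] at hrev
      rcases List.mem_cons.mp hrev with h1 | h2
      · rcases Sym2.eq_iff.mp h1 with ⟨-, h⟩ | ⟨h1', h2'⟩
        · exact hzw h
        · exact hadjz.ne h2'.symm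
      · exact husup (SimpleGraph.Walk.fst_mem_support_of_mem_edges q' h2)
    exact hz ⟨p.toDeleteEdges _ hnotin⟩
  rw [key v hv hfar, key v' hv' hfar']

end AuxRw

section AuxFin

open Fin.NatCast Fin.CommRing

lemma fin_no_two_cycle {l : ℕ} [NeZero l] (hl : 3 ≤ l) {i j : Fin l}
    (h1 : i = j + 1) (h2 : j = i + 1) : False := by
  have h3 : i + (1 + 1) = i + 0 := by
    rw [add_zero, ← add_assoc, ← h2, ← h1]
  have h4 : (1 + 1 : Fin l) = 0 := add_left_cancel h3
  have h5 : ((2:ℕ) : Fin l) = 0 := by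
    rw [show ((2:ℕ) : Fin l) = 1 + 1 by push_cast; ring]
    exact h4
  rw [Fin.natCast_eq_zero] at h5
  have := Nat.le_of_dvd (by norm_num) h5
  omega

lemma cyc_edges_ne {l : ℕ} [NeZero l] (hl : 3 ≤ l) {c : Fin l → V}
    (hinj : Function.Injective c) {i j : Fin l} (hij : i ≠ j) :
    s(c i, c (i+1)) ≠ s(c j, c (j+1)) := by
  intro hh
  rcases Sym2.eq_iff.mp hh with ⟨h1, h2⟩ | ⟨h1, h2⟩
  · exact hij (hinj h1)
  · exact fin_no_two_cycle hl (hinj h1) (hinj h2).symm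

lemma chain_reach {l : ℕ} [NeZero l] {H : SimpleGraph V} {c : Fin l → V} (i : Fin l) :
    ∀ k : ℕ, (∀ m : ℕ, m < k → H.Adj (c (i + m)) (c (i + m + 1))) →
      H.Reachable (c i) (c (i + k)) := by
  intro k
  induction k with
  | zero =>
      intro _
      rw [show ((0:ℕ) : Fin l) = 0 from Nat.cast_zero, add_zero]
  | succ k ih =>
      intro h
      have h1 := ih (fun m hm => h m (Nat.lt_succ_of_lt hm))
      have h2 : H.Adj (c (i + k)) (c (i + k + 1)) := h k (Nat.lt_succ_self k)
      have hc : ((k+1 : ℕ) : Fin l) = (k : Fin l) + 1 := by push_cast; ring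
      rw [hc, ← add_assoc]
      exact h1.trans h2.reachable

lemma reach_all_cycle {l : ℕ} [NeZero l] (hl : 3 ≤ l) {H : SimpleGraph V} {c : Fin l → V}
    (hadjH : ∀ i : Fin l, i ≠ 0 → H.Adj (c i) (c (i+1))) (j : Fin l) :
    H.Reachable (c 1) (c j) := by
  have hcast : ((1:ℕ) : Fin l) = (1 : Fin l) := by push_cast; ring
  have := chain_reach (H := H) (c := c) 1 (j - 1).val ?_
  · rw [Fin.cast_val_eq_self] at this
    rw [show (1 : Fin l) + (j - 1) = j by ring] at this
    exact this
  · intro m hm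
    have hjl : ((j : Fin l) - 1).val < l := Fin.is_lt _
    have hmlt : 1 + m < l := by omega
    have hv : ((1 : Fin l) + (m : Fin l)).val = 1 + m := by
      rw [← hcast, ← Nat.cast_add, Fin.val_natCast, Nat.mod_eq_of_lt hmlt]
    apply hadjH
    intro h0
    rw [h0, Fin.val_zero] at hv
    omega
end AuxFin
section Bridge

variable [Fintype V]

lemma bridge_eres {G : SimpleGraph V} (hpre : G.Preconnected) {x u v : V}
    (huv : G.Adj u v) (hu : ¬ (G.deleteEdges {s(u,v)}).Reachable x u) :
    eres G x u = eres G x v + 1 := by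
  classical
  set A : Set V := {w | (G.deleteEdges {s(u,v)}).Reachable x w} with hA
  have hxA : x ∈ A := SimpleGraph.Reachable.refl x
  have huA : u ∉ A := hu
  have hvA : v ∈ A := reach_other hpre huv hu
  have hxu : x ≠ u := fun h => huA (h ▸ hxA)
  have hne : u ≠ v := huv.ne
  have hcross : ∀ a b : V, G.Adj a b → a ∈ A → b ∉ A → a = v ∧ b = u := by
    intro a b hab ha hb
    by_cases he : s(a,b) = s(u,v)
    · rcases Sym2.eq_iff.mp he with ⟨h1, h2⟩ | ⟨h1, h2⟩
      · rw [h1] at ha; exact absurd ha huA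
      · exact ⟨h1, h2⟩
    · refine absurd (ha.trans (SimpleGraph.Adj.reachable ?_)) hb
      rw [SimpleGraph.deleteEdges_adj]
      exact ⟨hab, by simpa using he⟩
  set P1 : Finset (V × V) := (DPairs G).filter (fun p => p.1 ∈ A ∧ p.2 ∈ A) with hP1
  set P2 : Finset (V × V) := {(v,u), (u,v)} with hP2
  have hvu_ne : ((v,u) : V × V) ≠ (u,v) := fun h => hne (congrArg Prod.snd h)
  have hP2sub : P2 ⊆ DPairs G := by
    intro p hp
    rcases Finset.mem_insert.mp hp with rfl | hp'
    · exact mem_DPairs huv.symm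
    · rw [Finset.mem_singleton] at hp'; subst hp'; exact mem_DPairs huv
  have hsub : P1 ∪ P2 ⊆ DPairs G := Finset.union_subset (Finset.filter_subset _ _) hP2sub
  have hdisj : Disjoint P1 P2 := by
    rw [Finset.disjoint_right]
    intro p hp
    rcases Finset.mem_insert.mp hp with rfl | hp'
    · intro hmem; exact huA (Finset.mem_filter.mp hmem).2.2
    · rw [Finset.mem_singleton] at hp'; subst hp'
      intro hmem; exact huA (Finset.mem_filter.mp hmem).2.1
  have hclass : ∀ p ∈ DPairs G, p ∉ P1 → p ∉ P2 → p.1 ∉ A ∧ p.2 ∉ A := by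
    intro p hp h1 h2
    by_cases hA1 : p.1 ∈ A
    · by_cases hA2 : p.2 ∈ A
      · exact absurd (Finset.mem_filter.mpr ⟨hp, hA1, hA2⟩) h1
      · obtain ⟨e1, e2⟩ := hcross p.1 p.2 (adj_of_mem_DPairs hp) hA1 hA2
        refine absurd ?_ h2
        rw [hP2]
        have : p = (v, u) := Prod.ext e1 e2
        rw [this]; exact Finset.mem_insert_self _ _
    · refine ⟨hA1, fun hA2 => ?_⟩
      obtain ⟨e1, e2⟩ := hcross p.2 p.1 (adj_of_mem_DPairs hp).symm hA2 hA1
      refine h2 ?_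
      rw [hP2]
      have : p = (u, v) := Prod.ext e2 e1
      rw [this]; exact Finset.mem_insert_of_mem (Finset.mem_singleton_self _)
  have hP2sum : ∀ ψ : V → ℝ, ∑ p ∈ P2, (ψ p.1 - ψ p.2)^2 = (ψ v - ψ u)^2 + (ψ u - ψ v)^2 := by
    intro ψ
    rw [hP2, Finset.sum_pair hvu_ne]
  have hsum_split : ∀ ψ : V → ℝ, (∀ p ∈ DPairs G, p ∉ P1 → p ∉ P2 → (ψ p.1 - ψ p.2)^2 = 0) →
      2 * energyFn G ψ = ∑ p ∈ P1, (ψ p.1 - ψ p.2)^2 + ((ψ v - ψ u)^2 + (ψ u - ψ v)^2) := by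
    intro ψ h0
    have key : ∑ p ∈ DPairs G, (ψ p.1 - ψ p.2)^2 = ∑ p ∈ P1 ∪ P2, (ψ p.1 - ψ p.2)^2 :=
      (Finset.sum_subset hsub (fun p hp hnp => h0 p hp
        (fun h => hnp (Finset.mem_union_left _ h))
        (fun h => hnp (Finset.mem_union_right _ h)))).symm
    rw [energy_eq, key, Finset.sum_union hdisj, hP2sum ψ]
    ring
  have hpair_bound : ∀ φ : V → ℝ, φ u = 0 →
      ∑ p ∈ P1, (φ p.1 - φ p.2)^2 + 2*(φ v)^2 ≤ 2 * energyFn G φ := by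
    intro φ hφu
    rw [energy_eq]
    have hs := Finset.sum_le_sum_of_subset_of_nonneg hsub
      (fun p _ _ => sq_nonneg (φ p.1 - φ p.2))
    rw [Finset.sum_union hdisj, hP2sum φ, hφu] at hs
    nlinarith [hs]
  have hlow : ∀ C : ℝ, 0 ≤ C → (∀ e ∈ ESet G x v, C ≤ e) → ∀ e ∈ ESet G x u, C/(C+1) ≤ e := by
    rintro C hC hCle e ⟨φ, hφx, hφu, rfl⟩
    have hpair := hpair_bound φ hφu
    set t := φ v with ht
    have hmain : (1-t)^2 * C + t^2 ≤ energyFn G φ := by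
      by_cases ht1 : t = 1
      · have h1 : (0:ℝ) ≤ ∑ p ∈ P1, (φ p.1 - φ p.2)^2 :=
          Finset.sum_nonneg fun p _ => sq_nonneg _
        rw [ht1]; nlinarith [hpair]
      · set ψ := fun w => if w ∈ A then (φ w - t)/(1-t) else 0 with hψ
        have ht1' : (1:ℝ) - t ≠ 0 := sub_ne_zero.mpr (Ne.symm ht1)
        have hψx : ψ x = 1 := by
          rw [hψ]; simp only [if_pos hxA, hφx]; field_simp
        have hψv : ψ v = 0 := by
          rw [hψ]; simp only [if_pos hvA, ht, sub_self, zero_div]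
        have hCψ : C ≤ energyFn G ψ := hCle _ ⟨ψ, hψx, hψv, rfl⟩
        have h0 : ∀ p ∈ DPairs G, p ∉ P1 → p ∉ P2 → (ψ p.1 - ψ p.2)^2 = 0 := by
          intro p hp h1 h2
          obtain ⟨hn1, hn2⟩ := hclass p hp h1 h2
          rw [hψ]; simp [if_neg hn1, if_neg hn2]
        have hsplit := hsum_split ψ h0
        have hψu : ψ u = 0 := by rw [hψ]; simp [huA]
        rw [hψv, hψu] at hsplit
        have hP1eq : ∑ p ∈ P1, (φ p.1 - φ p.2)^2 = (1-t)^2 * ∑ p ∈ P1, (ψ p.1 - ψ p.2)^2 := by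
          rw [Finset.mul_sum]
          refine Finset.sum_congr rfl fun p hp => ?_
          obtain ⟨hp1, hp2⟩ := (Finset.mem_filter.mp hp).2
          rw [hψ]; simp only [if_pos hp1, if_pos hp2]
          field_simp
          try ring
        have hm : (1-t)^2 * C ≤ (1-t)^2 * energyFn G ψ :=
          mul_le_mul_of_nonneg_left hCψ (sq_nonneg _)
        nlinarith [hpair, hsplit, hP1eq, hm]
    have h1C : (0:ℝ) < C + 1 := by linarith
    rw [div_le_iff₀ h1C]
    nlinarith [hmain, sq_nonneg ((C+1)*t - C)]
  have hupp : ∀ e ∈ ESet G x v, 0 ≤ e → ∃ e' ∈ ESet G x u, e' ≤ e/(e+1) := by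
    rintro e ⟨φ, hφx, hφv, rfl⟩ he0
    set E := energyFn G φ with hE
    have hE1 : (0:ℝ) < E + 1 := by linarith
    set s : ℝ := 1/(E+1) with hs
    set ψ := fun w => if w ∈ A then 1 - s*(1 - φ w) else 0 with hψ
    have hψx : ψ x = 1 := by rw [hψ]; simp [hxA, hφx]
    have hψu : ψ u = 0 := by rw [hψ]; simp [huA]
    refine ⟨energyFn G ψ, ⟨ψ, hψx, hψu, rfl⟩, ?_⟩
    have h0 : ∀ p ∈ DPairs G, p ∉ P1 → p ∉ P2 → (ψ p.1 - ψ p.2)^2 = 0 := by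
      intro p hp h1 h2
      obtain ⟨hn1, hn2⟩ := hclass p hp h1 h2
      rw [hψ]; simp [if_neg hn1, if_neg hn2]
    have hsplit := hsum_split ψ h0
    have hψv : ψ v = 1 - s := by rw [hψ]; simp [hvA, hφv]
    rw [hψv, hψu] at hsplit
    have hP1le : ∑ p ∈ P1, (ψ p.1 - ψ p.2)^2 ≤ s^2 * (2*E) := by
      have heq : ∑ p ∈ P1, (ψ p.1 - ψ p.2)^2 = s^2 * ∑ p ∈ P1, (φ p.1 - φ p.2)^2 := by
        rw [Finset.mul_sum]
        refine Finset.sum_congr rfl fun p hp => ?_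
        obtain ⟨hp1, hp2⟩ := (Finset.mem_filter.mp hp).2
        rw [hψ]; simp only [if_pos hp1, if_pos hp2]
        ring
      rw [heq, hE]
      have h2 := sum_sq_le_twice_energy G φ (Finset.filter_subset _ _ : P1 ⊆ DPairs G)
      nlinarith [sq_nonneg s]
    have hEψ : energyFn G ψ ≤ s^2*E + (1-s)^2 := by nlinarith [hsplit, hP1le]
    have hfin : s^2*E + (1-s)^2 = E/(E+1) := by
      rw [hs]; field_simp; ring
    linarith [hEψ]
  by_cases hxv : x = v
  · have hSv : ESet G x v = ∅ := by
      ext e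
      simp only [Set.mem_empty_iff_false, iff_false]
      rintro ⟨φ, h1, h2, -⟩
      rw [hxv] at h1; rw [h1] at h2; norm_num at h2
    have hresv : eres G x v = 0 := by
      rw [eres_def, hSv, Real.sInf_empty, inv_zero]
    have hS1 : sInf (ESet G x u) = 1 := by
      apply le_antisymm
      · set ψ := fun w => if w ∈ A then (1:ℝ) else 0 with hψ
        have hψx : ψ x = 1 := by rw [hψ]; simp [hxA]
        have hψu : ψ u = 0 := by rw [hψ]; simp [huA]
        have h0 : ∀ p ∈ DPairs G, p ∉ P1 → p ∉ P2 → (ψ p.1 - ψ p.2)^2 = 0 := by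
          intro p hp h1 h2
          obtain ⟨hn1, hn2⟩ := hclass p hp h1 h2
          rw [hψ]; simp [if_neg hn1, if_neg hn2]
        have hsplit := hsum_split ψ h0
        have hψv : ψ v = 1 := by rw [hψ]; simp [hvA]
        rw [hψv, hψu] at hsplit
        have hP1z : ∑ p ∈ P1, (ψ p.1 - ψ p.2)^2 = 0 := by
          refine Finset.sum_eq_zero fun p hp => ?_
          obtain ⟨hp1, hp2⟩ := (Finset.mem_filter.mp hp).2
          rw [hψ]; simp [if_pos hp1, if_pos hp2]
        have hEψ : energyFn G ψ = 1 := by nlinarith [hsplit, hP1z]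
        exact csInf_le (bddBelow_ESet G x u) ⟨ψ, hψx, hψu, hEψ.symm⟩
      · refine le_csInf (ESet_nonempty hxu) ?_
        rintro e ⟨φ, hφx, hφu, rfl⟩
        have hφv : φ v = 1 := by rw [← hxv]; exact hφx
        have hs := Finset.sum_le_sum_of_subset_of_nonneg hP2sub
          (fun p _ _ => sq_nonneg (φ p.1 - φ p.2))
        rw [hP2sum φ, hφv, hφu] at hs
        rw [energy_eq]
        nlinarith [hs]
    rw [eres_def, hS1, hresv]
    norm_num
  · have hCpos : 0 < sInf (ESet G x v) := sInf_ESet_pos (hpre x v) hxv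
    set C := sInf (ESet G x v) with hC
    have hble : ∀ e ∈ ESet G x v, C ≤ e := fun e he => csInf_le (bddBelow_ESet G x v) he
    have hlb : C/(C+1) ≤ sInf (ESet G x u) :=
      le_csInf (ESet_nonempty hxu) (hlow C hCpos.le hble)
    have hub : sInf (ESet G x u) ≤ C/(C+1) := by
      by_contra hcon
      push_neg at hcon
      set ε := (sInf (ESet G x u) - C/(C+1))/2 with hε
      have hεpos : 0 < ε := by rw [hε]; linarith
      have h1 : sInf (ESet G x v) < C + ε := by rw [← hC]; linarith
      obtain ⟨e, heS, helt⟩ := exists_lt_of_csInf_lt (ESet_nonempty hxv) h1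
      obtain ⟨e', he'S, he'le⟩ := hupp e heS (ESet_nonneg e heS)
      have h2 : sInf (ESet G x u) ≤ e' := csInf_le (bddBelow_ESet G x u) he'S
      have hCe : C ≤ e := hble e heS
      have he0 : (0:ℝ) ≤ e := ESet_nonneg e heS
      have hd : e/(e+1) ≤ C/(C+1) + ε := by
        have he1 : (0:ℝ) < e + 1 := by linarith
        have hC1 : (0:ℝ) < C + 1 := by linarith
        rw [div_le_iff₀ he1]
        have hD0 : 0 ≤ C/(C+1) := div_nonneg hCpos.le hC1.le
        have hDC : C/(C+1) * (C+1) = C := div_mul_cancel₀ C hC1.ne'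
        nlinarith [mul_le_mul_of_nonneg_left hCe hD0, mul_nonneg hεpos.le he0]
      rw [hε] at *
      linarith
    have hSu : sInf (ESet G x u) = C/(C+1) := le_antisymm hub hlb
    rw [eres_def, eres_def, hSu, ← hC]
    have hC0 : C ≠ 0 := ne_of_gt hCpos
    have hC1' : C + 1 ≠ 0 := by positivity
    rw [inv_div]
    field_simp
    try ring

end Bridge
section Count

lemma connected_card_le {W : Type*} [Fintype W] (H : SimpleGraph W) (hc : H.Connected) :
    Fintype.card W ≤ H.edgeFinset.card + 1 := by
  classical
  obtain ⟨root⟩ := hc.nonempty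
  have hstep : ∀ v : W, ∃ w : W, v ≠ root → H.Adj v w ∧ H.dist w root < H.dist v root := by
    intro v
    by_cases hv : v = root
    · exact ⟨root, fun h => absurd hv h⟩
    · have hd : H.dist v root ≠ 0 := by
        have := hc.pos_dist_of_ne hv
        omega
      obtain ⟨p, hp⟩ := SimpleGraph.exists_walk_of_dist_ne_zero hd
      obtain ⟨w, hadjw, q, rfl⟩ := SimpleGraph.Walk.exists_eq_cons_of_ne hv p
      refine ⟨w, fun _ => ⟨hadjw, ?_⟩⟩
      have h1 : H.dist w root ≤ q.length := SimpleGraph.dist_le q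
      rw [SimpleGraph.Walk.length_cons] at hp
      omega
  choose f hf using hstep
  have hmaps : ∀ v ∈ Finset.univ.erase root, s(v, f v) ∈ H.edgeFinset := by
    intro v hv
    have hv' : v ≠ root := (Finset.mem_erase.mp hv).1
    exact SimpleGraph.mem_edgeFinset.mpr ((hf v hv').1)
  have hinjf : Set.InjOn (fun v => s(v, f v)) (Finset.univ.erase root : Finset W) := by
    intro a ha b hb hab
    have ha' : a ≠ root := by
      have := Finset.mem_coe.mp ha; exact (Finset.mem_erase.mp this).1
    have hb' : b ≠ root := by
      have := Finset.mem_coe.mp hb; exact (Finset.mem_erase.mp this).1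
    rcases Sym2.eq_iff.mp hab with ⟨h1, -⟩ | ⟨h1, h2⟩
    · exact h1
    · exfalso
      have da := (hf a ha').2
      have db := (hf b hb').2
      rw [h2] at da
      rw [← h1] at db
      omega
  have hcard := Finset.card_le_card_of_injOn _ hmaps hinjf
  rw [Finset.card_erase_of_mem (Finset.mem_univ root), Finset.card_univ] at hcard
  omega

end Count
/-- If `G` is an `n`-vertex unicyclic graph whose unique cycle
has length `l` and `x` lies on the cycle, then `R^w(x) = 2·R(x) − (n − l)`. -/
theorem Rw_on_cycle [Fintype V] (G : SimpleGraph V) (n l : ℕ) [NeZero l]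
    (hn : Fintype.card V = n) (hconn : G.Connected) (huni : esize G = n)
    (hl : 3 ≤ l) (c : Fin l → V) (hinj : Function.Injective c)
    (hadj : ∀ i : Fin l, G.Adj (c i) (c (i + 1)))
    (x : V) (hx : ∃ i, c i = x) :
    Rw G x = 2 * Rres G x - ((n : ℝ) - l) := by
  classical
  obtain ⟨i₀, rfl⟩ := hx
  have hln : l ≤ n := by
    have := Fintype.card_le_of_injective c hinj
    rwa [Fintype.card_fin, hn] at this
  have hedge : G.edgeFinset.card = n := by
    rw [SimpleGraph.edgeFinset_card, ← Nat.card_eq_fintype_card, ← esize, huni]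
  set Dc := (DPairs G).filter (fun p : V × V => ∃ i : Fin l, s(p.1, p.2) = s(c i, c (i+1)))
    with hDc
  set Dt := (DPairs G).filter
    (fun p : V × V => ¬ ∃ i : Fin l, s(p.1, p.2) = s(c i, c (i+1))) with hDt
  set Df := Dt.filter
    (fun p : V × V => ¬ (G.deleteEdges {s(p.1, p.2)}).Reachable (c i₀) p.1) with hDf
  set Dn := Dt.filter
    (fun p : V × V => ¬ ¬ (G.deleteEdges {s(p.1, p.2)}).Reachable (c i₀) p.1) with hDn
  -- Step 1 : Rw as a sum over ordered adjacent pairs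
  have hRw : Rw G (c i₀) = ∑ p ∈ DPairs G, eres G (c i₀) p.1 := by
    rw [Rw, show (DPairs G) = (Finset.univ ×ˢ Finset.univ).filter (fun p => G.Adj p.1 p.2)
      from rfl, Finset.sum_filter, Finset.sum_product]
    refine Finset.sum_congr rfl fun y _ => ?_
    have : ∑ z : V, (if G.Adj y z then eres G (c i₀) y else 0)
        = ∑ z ∈ Finset.univ.filter (fun z => G.Adj y z), eres G (c i₀) y :=
      (Finset.sum_filter _ _).symm
    rw [this, Finset.sum_const, nsmul_eq_mul, degR, mul_comm]
  -- Step 2 : cycle-dart sum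
  have hfwd_inj : Function.Injective (fun i : Fin l => (c i, c (i+1))) := by
    intro i j h
    exact hinj (congrArg Prod.fst h)
  have hbwd_inj : Function.Injective (fun i : Fin l => (c (i+1), c i)) := by
    intro i j h
    exact hinj (congrArg Prod.snd h)
  have hDceq : Dc = ((Finset.univ : Finset (Fin l)).image fun i => (c i, c (i+1))) ∪
      ((Finset.univ : Finset (Fin l)).image fun i => (c (i+1), c i)) := by
    ext p
    simp only [hDc, Finset.mem_filter, Finset.mem_union, Finset.mem_image,
      Finset.mem_univ, true_and]
    constructor
    · rintro ⟨hpD, i, hi⟩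
      rcases Sym2.eq_iff.mp hi with ⟨h1, h2⟩ | ⟨h1, h2⟩
      · exact Or.inl ⟨i, Prod.ext h1.symm h2.symm⟩
      · exact Or.inr ⟨i, Prod.ext h1.symm h2.symm⟩
    · rintro (⟨i, rfl⟩ | ⟨i, rfl⟩)
      · exact ⟨mem_DPairs (hadj i), ⟨i, rfl⟩⟩
      · exact ⟨mem_DPairs (hadj i).symm, ⟨i, Sym2.eq_swap⟩⟩
  have hdisjc : Disjoint ((Finset.univ : Finset (Fin l)).image fun i => (c i, c (i+1)))
      ((Finset.univ : Finset (Fin l)).image fun i => (c (i+1), c i)) := by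
    rw [Finset.disjoint_left]
    intro p hp hq
    rw [Finset.mem_image] at hp hq
    obtain ⟨i, -, hi⟩ := hp
    obtain ⟨j, -, hj⟩ := hq
    rw [← hj] at hi
    have h1 : c i = c (j+1) := congrArg Prod.fst hi
    have h2 : c (i+1) = c j := congrArg Prod.snd hi
    exact fin_no_two_cycle hl (hinj h1) (hinj h2).symm
  have hsumDc : ∑ p ∈ Dc, eres G (c i₀) p.1 = 2 * ∑ i : Fin l, eres G (c i₀) (c i) := by
    rw [hDceq, Finset.sum_union hdisjc,
      Finset.sum_image (fun a _ b _ h => hfwd_inj h),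
      Finset.sum_image (fun a _ b _ h => hbwd_inj h)]
    have h2 : ∑ i : Fin l, eres G (c i₀) (c (i+1)) = ∑ i : Fin l, eres G (c i₀) (c i) :=
      Fintype.sum_equiv (Equiv.addRight (1 : Fin l)) _ _ (fun i => rfl)
    calc (∑ i : Fin l, eres G (c i₀) (c i)) + ∑ i : Fin l, eres G (c i₀) (c (i+1))
        = (∑ i : Fin l, eres G (c i₀) (c i)) + ∑ i : Fin l, eres G (c i₀) (c i) := by rw [h2]
      _ = 2 * ∑ i : Fin l, eres G (c i₀) (c i) := by ring
  -- Step 3 : structure of tree darts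
  have hDt_elim : ∀ p ∈ Dt, G.Adj p.1 p.2 ∧ ∀ i : Fin l, s(c i, c (i+1)) ≠ s(p.1, p.2) := by
    intro p hp
    rw [hDt, Finset.mem_filter] at hp
    exact ⟨adj_of_mem_DPairs hp.1, fun i he => hp.2 ⟨i, he.symm⟩⟩
  have hcycle_near : ∀ p ∈ Dt, ∀ j : Fin l, p.1 = c j →
      (G.deleteEdges {s(p.1, p.2)}).Reachable (c i₀) p.1 := by
    intro p hp j hj
    have hnc := (hDt_elim p hp).2
    open Fin.NatCast Fin.CommRing in
    have hreach : (G.deleteEdges {s(p.1,p.2)}).Reachable (c i₀)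
        (c (i₀ + (((j - i₀ : Fin l)).val : ℕ))) := by
      apply chain_reach
      intro m _
      rw [SimpleGraph.deleteEdges_adj]
      exact ⟨hadj _, by simpa using hnc _⟩
    open Fin.NatCast Fin.CommRing in
    rw [Fin.cast_val_eq_self, show i₀ + (j - i₀) = j by ring] at hreach
    rwa [← hj] at hreach
  have hboth : ∀ p ∈ Dt, ((G.deleteEdges {s(p.1,p.2)}).Reachable (c i₀) p.1) →
      ((G.deleteEdges {s(p.1,p.2)}).Reachable (c i₀) p.2) → False := by
    intro p hp h1 h2
    have hnc := (hDt_elim p hp).2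
    have hpadj : G.Adj p.1 p.2 := (hDt_elim p hp).1
    have hstep1 : ∀ w, (G.deleteEdges {s(p.1,p.2)}).Reachable (c i₀) w := by
      intro w
      have hcl : ∀ a b, G.Adj a b → (G.deleteEdges {s(p.1,p.2)}).Reachable (c i₀) a →
          (G.deleteEdges {s(p.1,p.2)}).Reachable (c i₀) b := by
        intro a b hab ha
        by_cases hee : s(a,b) = s(p.1,p.2)
        · rcases Sym2.eq_iff.mp hee with ⟨h1', h2'⟩ | ⟨h1', h2'⟩
          · rw [h2']; exact h2
          · rw [h2']; exact h1
        · refine ha.trans (SimpleGraph.Adj.reachable ?_)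
          rw [SimpleGraph.deleteEdges_adj]
          exact ⟨hab, by simpa using hee⟩
      obtain ⟨wk⟩ := hconn.preconnected (c i₀) w
      exact reach_closure hcl (SimpleGraph.Reachable.refl _) wk
    have hene0 : s(p.1,p.2) ≠ s(c 0, c (0+1)) := fun hh => hnc 0 hh.symm
    set H2 := G.deleteEdges {s(p.1,p.2), s(c 0, c (0+1))} with hH2
    have hH2adj : ∀ i : Fin l, i ≠ 0 → H2.Adj (c i) (c (i+1)) := by
      intro i hi
      rw [hH2, SimpleGraph.deleteEdges_adj]
      refine ⟨hadj i, ?_⟩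
      simp only [Set.mem_insert_iff, Set.mem_singleton_iff]
      push_neg
      exact ⟨hnc i, cyc_edges_ne hl hinj hi⟩
    have hcyc2 : ∀ j : Fin l, H2.Reachable (c 1) (c j) := reach_all_cycle hl hH2adj
    have hstep2 : ∀ w, H2.Reachable (c i₀) w := by
      intro w
      have hx2 : ∀ j, H2.Reachable (c i₀) (c j) := fun j => (hcyc2 i₀).symm.trans (hcyc2 j)
      have hcl2 : ∀ a b, (G.deleteEdges {s(p.1,p.2)}).Adj a b →
          H2.Reachable (c i₀) a → H2.Reachable (c i₀) b := by
        intro a b hab ha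
        by_cases hee : s(a,b) = s(c 0, c (0+1))
        · rcases Sym2.eq_iff.mp hee with ⟨h1', h2'⟩ | ⟨h1', h2'⟩
          · rw [h2']; exact hx2 _
          · rw [h2']; exact hx2 _
        · refine ha.trans (SimpleGraph.Adj.reachable ?_)
          rw [SimpleGraph.deleteEdges_adj] at hab
          rw [hH2, SimpleGraph.deleteEdges_adj]
          refine ⟨hab.1, ?_⟩
          simp only [Set.mem_insert_iff, Set.mem_singleton_iff]
          push_neg
          exact ⟨by simpa using hab.2, hee⟩
      obtain ⟨wk⟩ := hstep1 w
      exact reach_closure hcl2 (SimpleGraph.Reachable.refl _) wk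
    have hconn2 : H2.Connected := by
      rw [SimpleGraph.connected_iff_exists_forall_reachable]
      exact ⟨c i₀, hstep2⟩
    have hcard2 : H2.edgeFinset.card = n - 2 := by
      have heq : H2.edgeFinset = G.edgeFinset \ ({s(p.1,p.2), s(c 0, c (0+1))} : Finset (Sym2 V)) := by
        ext a
        simp only [SimpleGraph.mem_edgeFinset, hH2, SimpleGraph.edgeSet_deleteEdges,
          Set.mem_diff, Finset.mem_sdiff, Finset.mem_insert, Finset.mem_singleton,
          Set.mem_insert_iff, Set.mem_singleton_iff]
        try tauto
      rw [heq, Finset.card_sdiff_of_subset]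
      · rw [hedge, Finset.card_insert_of_notMem (by simpa using hene0), Finset.card_singleton]
      · intro a ha
        simp only [Finset.mem_insert, Finset.mem_singleton] at ha
        rcases ha with rfl | rfl
        · exact SimpleGraph.mem_edgeFinset.mpr hpadj
        · exact SimpleGraph.mem_edgeFinset.mpr (hadj 0)
    have hle : n ≤ H2.edgeFinset.card + 1 := by
      have := connected_card_le H2 hconn2
      rw [hn] at this
      convert this using 3
      ext e
      simp only [SimpleGraph.mem_edgeFinset]
    rw [hcard2] at hle
    omega
  -- swap facts
  have hDt_swap : ∀ p : V × V, p ∈ Dt → p.swap ∈ Dt := by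
    intro p hp
    rw [hDt, Finset.mem_filter] at hp ⊢
    refine ⟨mem_DPairs (adj_of_mem_DPairs hp.1).symm, ?_⟩
    rintro ⟨i, hi⟩
    rw [Prod.fst_swap, Prod.snd_swap, Sym2.eq_swap] at hi
    exact hp.2 ⟨i, hi⟩

  have hes' : ∀ p : V × V, ({s(p.2, p.1)} : Set (Sym2 V)) = {s(p.1, p.2)} := by
    intro p
    rw [Sym2.eq_swap]
  have hfar_swap : ∀ p ∈ Dt,
      ((¬ (G.deleteEdges {s(p.swap.1, p.swap.2)}).Reachable (c i₀) p.swap.1) ↔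
        (G.deleteEdges {s(p.1, p.2)}).Reachable (c i₀) p.1) := by
    intro p hp
    have hpadj : G.Adj p.1 p.2 := (hDt_elim p hp).1
    rw [Prod.fst_swap, Prod.snd_swap]
    constructor
    · intro hf
      have hr := reach_other (u := p.2) (v := p.1) hconn.preconnected hpadj.symm hf
      rw [hes' p] at hr
      exact hr
    · intro hnf hr
      rw [hes' p] at hr
      exact hboth p hp hnf hr
  -- sum over Dn via swap
  have hDn_mem : ∀ p ∈ Dn, p.swap ∈ Df := by
    intro p hp
    rw [hDn, Finset.mem_filter] at hp
    rw [hDf, Finset.mem_filter]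
    exact ⟨hDt_swap p hp.1, (hfar_swap p hp.1).mpr (not_not.mp hp.2)⟩
  have hDf_mem : ∀ p ∈ Df, p.swap ∈ Dn := by
    intro p hp
    rw [hDf, Finset.mem_filter] at hp
    rw [hDn, Finset.mem_filter]
    refine ⟨hDt_swap p hp.1, ?_⟩
    have hiff := hfar_swap p.swap (hDt_swap p hp.1)
    rw [Prod.swap_swap] at hiff
    exact not_not.mpr (hiff.mp hp.2)
  have hsumDn : ∑ p ∈ Dn, eres G (c i₀) p.1 = ∑ p ∈ Df, eres G (c i₀) p.2 :=
    Finset.sum_nbij' (i := Prod.swap) (j := Prod.swap) hDn_mem hDf_mem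
      (fun p _ => Prod.swap_swap p) (fun p _ => Prod.swap_swap p)
      (fun p _ => rfl)
  -- bridge on Df
  have hsumDf2 : ∑ p ∈ Df, eres G (c i₀) p.1
      = ∑ p ∈ Df, eres G (c i₀) p.2 + (Df.card : ℝ) := by
    have hb : ∀ p ∈ Df, eres G (c i₀) p.1 = eres G (c i₀) p.2 + 1 := by
      intro p hp
      rw [hDf, Finset.mem_filter] at hp
      exact bridge_eres hconn.preconnected ((hDt_elim p hp.1).1) hp.2
    rw [Finset.sum_congr rfl hb, Finset.sum_add_distrib, Finset.sum_const, nsmul_eq_mul, mul_one]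
  -- cardinalities
  have hcardD : (DPairs G).card = 2 * n := by
    have h1 : (DPairs G).card = ∑ y : V, (Finset.univ.filter (fun z => G.Adj y z)).card := by
      rw [show (DPairs G) = (Finset.univ ×ˢ Finset.univ).filter (fun p => G.Adj p.1 p.2)
        from rfl, Finset.card_filter, Finset.sum_product]
      refine Finset.sum_congr rfl fun y _ => ?_
      rw [Finset.card_filter]
    have h2 : ∀ y : V, (Finset.univ.filter (fun z => G.Adj y z)).card = G.degree y := by
      intro y
      rw [← SimpleGraph.neighborFinset_eq_filter]
      rfl
    rw [h1, Finset.sum_congr rfl (fun y _ => h2 y),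
      SimpleGraph.sum_degrees_eq_twice_card_edges, hedge]
  have hcardDc : Dc.card = 2 * l := by
    rw [hDceq, Finset.card_union_of_disjoint hdisjc,
      Finset.card_image_of_injective _ hfwd_inj, Finset.card_image_of_injective _ hbwd_inj,
      Finset.card_univ, Fintype.card_fin]
    ring
  have hcardDt : Dt.card = 2*n - 2*l := by
    have hsplit := Finset.card_filter_add_card_filter_not
      (s := DPairs G) (p := fun p : V × V => ∃ i : Fin l, s(p.1, p.2) = s(c i, c (i+1)))
    rw [← hDc, ← hDt] at hsplit
    omega
  have hcard_swap : Df.card = Dn.card :=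
    Finset.card_nbij' (i := Prod.swap) (j := Prod.swap) hDf_mem hDn_mem
      (fun p _ => Prod.swap_swap p) (fun p _ => Prod.swap_swap p)
  have hcardDfDn : Df.card + Dn.card = Dt.card := by
    have hsplit := Finset.card_filter_add_card_filter_not (s := Dt)
      (p := fun p : V × V => ¬ (G.deleteEdges {s(p.1, p.2)}).Reachable (c i₀) p.1)
    rw [← hDf, ← hDn] at hsplit
    exact hsplit
  have hcardDf : Df.card = n - l := by omega
  -- image of Df under fst
  have hinjOn : Set.InjOn Prod.fst (Df : Set (V × V)) := by
    intro p hp q hq hpq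
    have hp' : p ∈ Df := Finset.mem_coe.mp hp
    have hq' : q ∈ Df := Finset.mem_coe.mp hq
    rw [hDf, Finset.mem_filter] at hp' hq'
    have hpadj : G.Adj p.1 p.2 := (hDt_elim p hp'.1).1
    have hqadj : G.Adj q.1 q.2 := (hDt_elim q hq'.1).1
    have hfp := hp'.2
    have hfq := hq'.2
    rw [← hpq] at hqadj hfq
    have := far_unique hconn.preconnected hpadj hqadj hfp hfq
    exact Prod.ext hpq this
  have himg : Df.image Prod.fst = Finset.univ \ Finset.univ.image c := by
    apply Finset.eq_of_subset_of_card_le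
    · intro w hw
      rw [Finset.mem_image] at hw
      obtain ⟨p, hp, rfl⟩ := hw
      rw [Finset.mem_sdiff]
      refine ⟨Finset.mem_univ _, fun hwc => ?_⟩
      rw [Finset.mem_image] at hwc
      obtain ⟨j, -, hj⟩ := hwc
      have hp' := hp
      rw [hDf, Finset.mem_filter] at hp'
      exact hp'.2 (hcycle_near p hp'.1 j hj.symm)
    · rw [Finset.card_sdiff_of_subset (Finset.subset_univ _), Finset.card_univ, hn,
        Finset.card_image_of_injective _ hinj, Finset.card_univ, Fintype.card_fin,
        Finset.card_image_of_injOn hinjOn, hcardDf]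
  have hsumDf1 : ∑ p ∈ Df, eres G (c i₀) p.1
      = ∑ w ∈ Finset.univ \ Finset.univ.image c, eres G (c i₀) w := by
    rw [← himg, Finset.sum_image (fun p hp q hq h => hinjOn hp hq h)]
  -- Rres split
  have hRres : Rres G (c i₀) = (∑ i : Fin l, eres G (c i₀) (c i))
      + ∑ w ∈ Finset.univ \ Finset.univ.image c, eres G (c i₀) w := by
    rw [Rres, ← Finset.sum_sdiff (Finset.subset_univ (Finset.univ.image c)),
      Finset.sum_image (fun i _ j _ h => hinj h)]
    ring
  -- assembling
  have hsplit1 : ∑ p ∈ DPairs G, eres G (c i₀) p.1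
      = ∑ p ∈ Dc, eres G (c i₀) p.1 + ∑ p ∈ Dt, eres G (c i₀) p.1 := by
    have := Finset.sum_filter_add_sum_filter_not (DPairs G)
      (fun p : V × V => ∃ i : Fin l, s(p.1, p.2) = s(c i, c (i+1)))
      (fun p => eres G (c i₀) p.1)
    rw [← hDc, ← hDt] at this
    exact this.symm
  have hsplit2 : ∑ p ∈ Dt, eres G (c i₀) p.1
      = ∑ p ∈ Df, eres G (c i₀) p.1 + ∑ p ∈ Dn, eres G (c i₀) p.1 := by
    have := Finset.sum_filter_add_sum_filter_not Dt
      (fun p : V × V => ¬ (G.deleteEdges {s(p.1, p.2)}).Reachable (c i₀) p.1)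
      (fun p => eres G (c i₀) p.1)
    rw [← hDf, ← hDn] at this
    exact this.symm
  have hcast : (Df.card : ℝ) = (n : ℝ) - l := by
    rw [hcardDf, Nat.cast_sub hln]
  rw [hRw, hsplit1, hsplit2, hRres]
  linarith [hsumDc, hsumDn, hsumDf2, hsumDf1, hcast]
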